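/- Each of the sets X_n = {(x(α,n), x(β,n)) : n ∈ A_α ∩ B_β, α, β ∈ ω₁} is a closed discrete subset of S_{ω₁} × S_{ω₁}. -/

import Mathlib

open Set Filter Topology Cardinal

/-- The sequential fan with spokes indexed by `κ`: underlying set is
`Option (κ × ℕ)`, with `none` the apex and `some (α, n)` the `n`-th point
of the `α`-th spoke. -/
def Fan (κ : Type*) : Type _ := Option (κ × ℕ)

/-- The quotient topology on the fan: each point `some (α, n)` is isolated and
a set containing the apex is open iff it contains a tail of every spoke. -/
instance Fan.instTopologicalSpace (κ : Type*) : TopologicalSpace (Fan κ) where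
  IsOpen s := (none : Option (κ × ℕ)) ∈ s → ∀ α : κ, {n : ℕ | (some (α, n) : Option (κ × ℕ)) ∉ s}.Finite
  isOpen_univ := by intro _ α; exact Set.finite_empty.subset (fun n hn => (hn trivial).elim)
  isOpen_inter := by
    intro s t hs ht hmem α
    refine ((hs hmem.1 α).union (ht hmem.2 α)).subset ?_
    intro n hn
    by_contra h
    simp only [Set.mem_union, Set.mem_setOf_eq] at h
    push_neg at h
    exact hn ⟨h.1, h.2⟩
  isOpen_sUnion := by
    intro S hS hmem α
    obtain ⟨s, hsS, hs⟩ := hmem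
    refine (hS s hsS hs α).subset ?_
    intro n hn hns
    exact hn (Set.mem_sUnion.2 ⟨s, hsS, hns⟩)

/-- The apex of the sequential fan. -/
def Fan.apex {κ : Type*} : Fan κ := (none : Option (κ × ℕ))

/-- The `n`-th point of the `α`-th spoke of the sequential fan. -/
def Fan.pt {κ : Type*} (α : κ) (n : ℕ) : Fan κ := (some (α, n) : Option (κ × ℕ))


lemma Fan.isOpen_iff {κ : Type*} (s : Set (Fan κ)) :
    IsOpen s ↔ ((none : Option (κ × ℕ)) ∈ s →
      ∀ α : κ, {n : ℕ | (some (α, n) : Option (κ × ℕ)) ∉ s}.Finite) :=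
  Iff.rfl

lemma Fan.isOpen_singleton {κ : Type*} (α : κ) (n : ℕ) :
    IsOpen ({Fan.pt α n} : Set (Fan κ)) := by
  rw [Fan.isOpen_iff]
  intro h
  exact absurd h (fun h' => Option.some_ne_none (α, n) (Set.mem_singleton_iff.1 h').symm)

lemma Fan.cases' {κ : Type*} (x : Fan κ) :
    x = Fan.apex ∨ ∃ α n, x = Fan.pt α n := by
  show x = none ∨ ∃ α n, x = some (α, n)
  match x with
  | none => exact Or.inl rfl
  | some (α, n) => exact Or.inr ⟨α, n, rfl⟩

lemma Fan.pt_inj {κ : Type*} {α α' : κ} {n n' : ℕ}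
    (h : (Fan.pt α n : Fan κ) = Fan.pt α' n') : α = α' ∧ n = n' := by
  have : (some (α, n) : Option (κ × ℕ)) = some (α', n') := h
  simpa using this

lemma Fan.isOpen_W {κ : Type*} (n : ℕ) :
    IsOpen {x : Fan κ | ∀ α : κ, x ≠ Fan.pt α n} := by
  rw [Fan.isOpen_iff]
  intro _ α
  refine (Set.finite_singleton n).subset ?_
  intro m hm
  by_contra hmn
  simp only [Set.mem_singleton_iff] at hmn
  exact hm fun β hβ => hmn (Fan.pt_inj (show (Fan.pt α m : Fan κ) = Fan.pt β n from hβ)).2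

/-- Each set `X_n` built from almost disjoint families `A`, `B` is a closed
discrete subset of `S_{ω₁} × S_{ω₁}`. -/
theorem fan_square_family_closed_discrete (ι : Type) (hι : #ι = aleph 1)
    (A B : ι → Set ℕ) (hA : ∀ α, (A α).Infinite) (hB : ∀ α, (B α).Infinite)
    (hAB : ∀ α β, (A α ∩ B β).Finite)
    (X : ℕ → Set (Fan ι × Fan ι))
    (hX : ∀ n, X n = {p | ∃ α β : ι, n ∈ A α ∩ B β ∧ p = (Fan.pt α n, Fan.pt β n)})
    (n : ℕ) :
    IsClosed (X n) ∧ DiscreteTopology ↥(X n) := by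
  have hne : ∀ (α β : ι) (m : ℕ), Fan.pt α m ≠ (Fan.apex : Fan ι) := by
    intro α β m h
    exact Option.some_ne_none _ h
  constructor
  · rw [← isOpen_compl_iff, isOpen_prod_iff]
    intro a b hab
    rcases Fan.cases' a with ha | ⟨α, m, ha⟩
    · refine ⟨{x : Fan ι | ∀ α : ι, x ≠ Fan.pt α n}, Set.univ,
        Fan.isOpen_W n, isOpen_univ, ?_, trivial, ?_⟩
      · intro γ h; rw [ha] at h; exact hne γ γ n h.symm
      · rintro ⟨u, v⟩ ⟨hu, -⟩ hmem
        rw [hX n] at hmem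
        obtain ⟨α', β', -, hp⟩ := hmem
        exact hu α' (congrArg Prod.fst hp)
    · by_cases hm : n = m
      · subst hm
        rcases Fan.cases' b with hb | ⟨β, k, hb⟩
        · refine ⟨Set.univ, {x : Fan ι | ∀ α : ι, x ≠ Fan.pt α n},
            isOpen_univ, Fan.isOpen_W n, trivial, ?_, ?_⟩
          · intro γ h; rw [hb] at h; exact hne γ γ n h.symm
          · rintro ⟨u, v⟩ ⟨-, hv⟩ hmem
            rw [hX n] at hmem
            obtain ⟨α', β', -, hp⟩ := hmem
            exact hv β' (congrArg Prod.snd hp)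
        · by_cases hk : n = k
          · subst hk
            refine ⟨{Fan.pt α n}, {Fan.pt β n}, Fan.isOpen_singleton α n,
              Fan.isOpen_singleton β n, ha, hb, ?_⟩
            rintro ⟨u, v⟩ ⟨hu, hv⟩ hmem
            rw [Set.mem_singleton_iff] at hu hv
            subst hu; subst hv
            rw [ha, hb] at hab
            exact hab hmem
          · refine ⟨Set.univ, {Fan.pt β k}, isOpen_univ,
              Fan.isOpen_singleton β k, trivial, hb, ?_⟩
            rintro ⟨u, v⟩ ⟨-, hv⟩ hmem
            rw [hX n] at hmem
            obtain ⟨α', β', -, hp⟩ := hmem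
            rw [Set.mem_singleton_iff] at hv
            have := congrArg Prod.snd hp
            rw [hv] at this
            exact hk (Fan.pt_inj this).2.symm
      · -- m ≠ n : first coordinate singleton suffices
        refine ⟨{Fan.pt α m}, Set.univ, Fan.isOpen_singleton α m, isOpen_univ,
          ha, trivial, ?_⟩
        rintro ⟨u, v⟩ ⟨hu, -⟩ hmem
        rw [hX n] at hmem
        obtain ⟨α', β', -, hp⟩ := hmem
        rw [Set.mem_singleton_iff] at hu
        have := congrArg Prod.fst hp
        rw [hu] at this
        exact hm (Fan.pt_inj this).2.symm
  · rw [discreteTopology_iff_isOpen_singleton]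
    rintro ⟨p, hp⟩
    have hp' := hp
    rw [hX n] at hp'
    obtain ⟨α, β, -, rfl⟩ := hp'
    have hopen : IsOpen ({(Fan.pt α n, Fan.pt β n)} : Set (Fan ι × Fan ι)) := by
      rw [← Set.singleton_prod_singleton]
      exact (Fan.isOpen_singleton α n).prod (Fan.isOpen_singleton β n)
    refine ⟨{(Fan.pt α n, Fan.pt β n)}, hopen, ?_⟩
    ext ⟨q, hq⟩
    simp [Subtype.ext_iff]
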